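/- A lattice point x = (x_{i,k}) ∈ ℤ^N lies in the generalized twisted cube C if and only if there exist integers i_{1,0}, i_{2,0}, …, i_{m,0} such that for every 1 ≤ t ≤ m: (a) ℓ_t + i_{t,0} + Σ_{k=1}^{n_t} x_{t,k} + Σ_{j=t+1}^{m} Σ_{p=1}^{n_j} c_{t,j}^{(p)} x_{j,p} = 0, and (b) sgn(i_{t,0}) = sgn(x_{t,1}) = ⋯ = sgn(x_{t,n_t}). -/

import Mathlib

/-!
Generalized Bott manifold data: `m ≥ 1`, block sizes `n : Fin m → ℕ` (each ≥ 1),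
integers `ℓ : Fin m → ℤ` and `c i j k` (used only for `i < j`).
The lattice `ℤ^{N+1}` is realized as functions `((Σ i, Fin (n i)) ⊕ Unit) → ℤ`,
with standard basis `E p`; `E (Sum.inr ())` is `e_{m+1}`.
-/

noncomputable section

namespace GB

variable (m : ℕ) (n : Fin m → ℕ)

/-- The double-index set for the coordinates `x_{i,k}`, `1 ≤ i ≤ m`, `1 ≤ k ≤ n_i`. -/
abbrev J : Type := Σ i : Fin m, Fin (n i)

/-- The lattice `ℤ^{N+1}`. -/
abbrev L : Type := (J m n ⊕ Unit) → ℤ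

/-- Standard basis vector of `ℤ^{N+1}`. -/
def E (p : J m n ⊕ Unit) : L m n := fun q => if q = p then 1 else 0

/-- The basis element `λ^μ` of the group ring `ℤ[ℤ^{N+1}]`. -/
def lam (μ : L m n) : AddMonoidAlgebra ℤ (L m n) := AddMonoidAlgebra.single μ 1

/-- `⟨x, e_i⟩ = Σ_k x_k e_{i,k}`. -/
def emb (i : Fin m) (z : Fin (n i) → ℤ) : L m n :=
  ∑ k : Fin (n i), z k • E m n (Sum.inl ⟨i, k⟩)

variable (ℓ : Fin m → ℤ) (c : (i j : Fin m) → Fin (n j) → ℤ)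

/-- `k_i(μ) = ℓ_i + Σ_{j=i+1}^m Σ_{k=1}^{n_j} c_{i,j}^{(k)} μ_{j,k}`. -/
def kfun (i : Fin m) (μ : L m n) : ℤ :=
  ℓ i + ∑ j : Fin m, ∑ k : Fin (n j), if i < j then c i j k * μ (Sum.inl ⟨j, k⟩) else 0

/-- `Δ⁻_{n,r} = {z ∈ ℤ_{≤0}^n : z_1 + ⋯ + z_n = -r}`. -/
def DeltaMinus (nn : ℕ) (r : ℤ) : Set (Fin nn → ℤ) :=
  {z | (∀ j, z j ≤ 0) ∧ ∑ j, z j = -r}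

/-- `Δ⁺_{n,r} = {z ∈ ℤ_{>0}^n : z_1 + ⋯ + z_n = r - 1}`. -/
def DeltaPlus (nn : ℕ) (r : ℤ) : Set (Fin nn → ℤ) :=
  {z | (∀ j, 0 < z j) ∧ ∑ j, z j = r - 1}

/-- The value of the operator `D_i` on the basis element `λ^μ`. -/
def Dsingle (i : Fin m) (μ : L m n) : AddMonoidAlgebra ℤ (L m n) :=
  if 0 ≤ kfun m n ℓ c i μ then
    ∑ r ∈ Finset.Icc (0 : ℤ) (kfun m n ℓ c i μ),
      ∑ᶠ z ∈ DeltaMinus (n i) r, lam m n (μ + emb m n i z)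
  else if -(n i : ℤ) ≤ kfun m n ℓ c i μ then 0
  else
    ∑ r ∈ Finset.Icc ((n i : ℤ) + 1) (-(kfun m n ℓ c i μ)),
      ∑ᶠ z ∈ DeltaPlus (n i) r, ((-1) ^ (n i) : ℤ) • lam m n (μ + emb m n i z)

/-- The ℤ-linear operator `D_i` on `ℤ[ℤ^{N+1}]`, extending `λ^μ ↦ Dsingle i μ`. -/
def Dop (i : Fin m) (f : AddMonoidAlgebra ℤ (L m n)) : AddMonoidAlgebra ℤ (L m n) :=
  Finsupp.sum f.coeff fun μ a => a • Dsingle m n ℓ c i μ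

/-- `A_i(x)`; for `i = m` the inner sum is empty, so `A_m(x) = -ℓ_m`. -/
def A (x : J m n → ℝ) (i : Fin m) : ℝ :=
  -(ℓ i + ∑ j : Fin m, ∑ k : Fin (n j), if i < j then (c i j k : ℝ) * x ⟨j, k⟩ else 0)

/-- The generalized twisted cube `C ⊆ ℝ^N`. -/
def C : Set (J m n → ℝ) :=
  {x | ∀ i : Fin m,
    (A m n ℓ c x i ≤ ∑ k, x ⟨i, k⟩ ∧ (∑ k, x ⟨i, k⟩) ≤ 0 ∧ ∀ k, x ⟨i, k⟩ ≤ 0) ∨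
    (0 < ∑ k, x ⟨i, k⟩ ∧ (∑ k, x ⟨i, k⟩) < A m n ℓ c x i ∧ ∀ k, 0 < x ⟨i, k⟩)}

/-- `sgn(t) = 1` if `t > 0`, `-1` if `t ≤ 0` (real argument). -/
def sgnR (t : ℝ) : ℤ := if 0 < t then 1 else -1

/-- `sgn(t) = 1` if `t > 0`, `-1` if `t ≤ 0` (integer argument). -/
def sgnZ (t : ℤ) : ℤ := if 0 < t then 1 else -1

open Classical in
/-- The density function `ρ` of the generalized twisted cube. -/
def rho (x : J m n → ℝ) : ℤ :=
  if x ∈ C m n ℓ c then (-1) ^ (∑ i, n i) * ∏ p : J m n, sgnR (x p) else 0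

end GB

end

/-- A lattice point `x ∈ ℤ^N` lies in the generalized twisted cube `C`
iff there exist integers `i_{1,0}, …, i_{m,0}` such that for every `t`:
`ℓ_t + i_{t,0} + Σ_k x_{t,k} + Σ_{j>t} Σ_p c_{t,j}^{(p)} x_{j,p} = 0` and
`sgn(i_{t,0}) = sgn(x_{t,k})` for all `k`. -/
theorem gbott_lattice_mem_cube_iff
    (m : ℕ) (hm : 1 ≤ m) (n : Fin m → ℕ) (hn : ∀ i, 1 ≤ n i)
    (ℓ : Fin m → ℤ) (c : (i j : Fin m) → Fin (n j) → ℤ)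
    (x : GB.J m n → ℤ) :
    ((fun p => (x p : ℝ)) ∈ GB.C m n ℓ c) ↔
      ∃ i0 : Fin m → ℤ, ∀ t : Fin m,
        (ℓ t + i0 t + ∑ k : Fin (n t), x ⟨t, k⟩ +
            ∑ j : Fin m, ∑ p : Fin (n j), (if t < j then c t j p * x ⟨j, p⟩ else 0) = 0) ∧
        ∀ k : Fin (n t), GB.sgnZ (i0 t) = GB.sgnZ (x ⟨t, k⟩) := by
  classical
  set K : Fin m → ℤ := fun t =>
    ℓ t + ∑ j : Fin m, ∑ p : Fin (n j), (if t < j then c t j p * x ⟨j, p⟩ else 0) with hK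
  set S : Fin m → ℤ := fun t => ∑ k : Fin (n t), x ⟨t, k⟩ with hS
  have hA : ∀ t : Fin m, GB.A m n ℓ c (fun p => (x p : ℝ)) t = ((-(K t) : ℤ) : ℝ) := by
    intro t
    simp only [GB.A, hK]
    push_cast
    ring_nf
  have hSum : ∀ t : Fin m, (∑ k : Fin (n t), ((x ⟨t, k⟩ : ℤ) : ℝ)) = ((S t : ℤ) : ℝ) := by
    intro t; simp [hS]
  have hC : ((fun p => (x p : ℝ)) ∈ GB.C m n ℓ c) ↔
      ∀ t : Fin m,
        ((-(K t) ≤ S t ∧ S t ≤ 0 ∧ ∀ k, x ⟨t, k⟩ ≤ 0) ∨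
         (0 < S t ∧ S t < -(K t) ∧ ∀ k, 0 < x ⟨t, k⟩)) := by
    constructor
    · intro h t
      have := h t
      simp only [GB.C, Set.mem_setOf_eq, hA t, hSum t] at this
      rcases this with ⟨h1, h2, h3⟩ | ⟨h1, h2, h3⟩
      · exact Or.inl ⟨by exact_mod_cast h1, by exact_mod_cast h2,
          fun k => by exact_mod_cast h3 k⟩
      · exact Or.inr ⟨by exact_mod_cast h1, by exact_mod_cast h2,
          fun k => by exact_mod_cast h3 k⟩
    · intro h t
      simp only [GB.C, Set.mem_setOf_eq, hA t, hSum t]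
      rcases h t with ⟨h1, h2, h3⟩ | ⟨h1, h2, h3⟩
      · exact Or.inl ⟨by exact_mod_cast h1, by exact_mod_cast h2,
          fun k => by exact_mod_cast h3 k⟩
      · exact Or.inr ⟨by exact_mod_cast h1, by exact_mod_cast h2,
          fun k => by exact_mod_cast h3 k⟩
  rw [hC]
  constructor
  · intro h
    refine ⟨fun t => -(K t) - S t, fun t => ?_⟩
    refine ⟨by simp only [hK, hS]; ring, fun k => ?_⟩
    rcases h t with ⟨h1, h2, h3⟩ | ⟨h1, h2, h3⟩
    · have hi : ¬ (0 < -(K t) - S t) := by omega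
      have hx : ¬ (0 < x ⟨t, k⟩) := not_lt.mpr (h3 k)
      simp [GB.sgnZ, hi, hx]
      omega
    · have hi : 0 < -(K t) - S t := by omega
      simp [GB.sgnZ, hi, h3 k]
      omega
  · rintro ⟨i0, hi0⟩ t
    obtain ⟨heq, hsgn⟩ := hi0 t
    have hi0t : i0 t = -(K t) - S t := by
      have : ℓ t + i0 t + S t + (K t - ℓ t) = 0 := by
        have hKt : K t - ℓ t =
            ∑ j : Fin m, ∑ p : Fin (n j), (if t < j then c t j p * x ⟨j, p⟩ else 0) := by
          simp [hK]
        rw [hKt]; exact heq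
      omega
    by_cases hpos : 0 < i0 t
    · have hx : ∀ k, 0 < x ⟨t, k⟩ := by
        intro k
        have := hsgn k
        simp only [GB.sgnZ, if_pos hpos] at this
        by_contra hxk
        rw [if_neg hxk] at this
        omega
      refine Or.inr ⟨?_, by omega, hx⟩
      have : (0 : ℤ) < ∑ k : Fin (n t), x ⟨t, k⟩ := by
        apply Finset.sum_pos (fun k _ => hx k)
        exact ⟨⟨0, hn t⟩, Finset.mem_univ _⟩
      simpa [hS] using this
    · have hx : ∀ k, x ⟨t, k⟩ ≤ 0 := by
        intro k
        have := hsgn k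
        simp only [GB.sgnZ, if_neg hpos] at this
        by_contra hxk
        rw [if_pos (by omega : 0 < x ⟨t, k⟩)] at this
        omega
      refine Or.inl ⟨by omega, ?_, hx⟩
      have : (∑ k : Fin (n t), x ⟨t, k⟩) ≤ 0 :=
        Finset.sum_nonpos (fun k _ => hx k)
      simpa [hS] using this
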